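/- Let k ≥ 3 and let s_1, ..., s_k be pairwise distinct complex numbers. Define, for 1 ≤ l ≤ k, c_l = ∏_{r=1}^{l−1} (s_r − s_{r+1})/(s_r − s_l) (with c_1 = 1) and c'_l = (−1)^{k−l} ∏_{r=l}^{k−1} (s_r − s_{r+1})/(s_l − s_{r+1}) (with c'_k = 1). Then ∑_{l=1}^{k} c_l · s_l · c'_l = 0. -/

import Mathlib

open Polynomial

lemma key_lagrange (k : ℕ) (hk : 3 ≤ k) (s : ℕ → ℂ)
    (hs : Set.InjOn s (Finset.range k)) :
    ∑ l ∈ Finset.range k, s l * ∏ j ∈ (Finset.range k).erase l, (s l - s j)⁻¹ = 0 := by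
  have hcard : (Finset.range k).card = k := Finset.card_range k
  have hX : (Polynomial.X : ℂ[X]) =
      Lagrange.interpolate (Finset.range k) s (fun i => Polynomial.eval (s i) Polynomial.X) := by
    apply Lagrange.eq_interpolate hs
    rw [hcard, Polynomial.degree_X]
    exact_mod_cast lt_of_lt_of_le (by norm_num) hk
  have hco := congrArg (fun p => Polynomial.coeff p (k - 1)) hX
  simp only [Lagrange.interpolate_apply, Polynomial.finset_sum_coeff,
    Polynomial.coeff_C_mul, Polynomial.eval_X] at hco
  have hXc : (Polynomial.X : ℂ[X]).coeff (k - 1) = 0 := by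
    rw [Polynomial.coeff_X]
    have : 1 ≠ k - 1 := by omega
    simp [this]
  have hb : ∀ l ∈ Finset.range k,
      (Lagrange.basis (Finset.range k) s l).coeff (k - 1) =
        Lagrange.nodalWeight (Finset.range k) s l := by
    intro l hl
    rw [Lagrange.basis_eq_prod_sub_inv_mul_nodal_div hl,
      ← Lagrange.nodal_erase_eq_nodal_div hl, Polynomial.coeff_C_mul]
    have hnd : (Lagrange.nodal ((Finset.range k).erase l) s).natDegree = k - 1 := by
      rw [Lagrange.natDegree_nodal, Finset.card_erase_of_mem hl, hcard]
    rw [← hnd, Lagrange.nodal_monic.coeff_natDegree, mul_one]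
  have heq : ∑ l ∈ Finset.range k, s l * ∏ j ∈ (Finset.range k).erase l, (s l - s j)⁻¹
      = ∑ x ∈ Finset.range k, s x * (Lagrange.basis (Finset.range k) s x).coeff (k - 1) := by
    refine Finset.sum_congr rfl fun l hl => ?_
    rw [hb l hl, Lagrange.nodalWeight]
  rw [heq, ← hco, hXc]

lemma term_eq (k l : ℕ) (hl : l < k) (s : ℕ → ℂ) :
    (∏ r ∈ Finset.range l, (s r - s (r + 1)) / (s r - s l)) * s l *
      ((-1 : ℂ) ^ (k - 1 - l) *
        ∏ r ∈ Finset.Ico l (k - 1), (s r - s (r + 1)) / (s l - s (r + 1)))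
    = (-1 : ℂ) ^ (k - 1) * (∏ r ∈ Finset.range (k - 1), (s r - s (r + 1))) *
        (s l * ∏ j ∈ (Finset.range k).erase l, (s l - s j)⁻¹) := by
  have hlk : l ≤ k - 1 := by omega
  -- split erase into two intervals
  have hE : (Finset.range k).erase l = Finset.range l ∪ Finset.Ico (l + 1) k := by
    ext x
    simp only [Finset.mem_erase, Finset.mem_range, Finset.mem_union, Finset.mem_Ico]
    omega
  have hdisj : Disjoint (Finset.range l) (Finset.Ico (l + 1) k) := by
    rw [Finset.disjoint_left]
    intro x hx hx'
    simp only [Finset.mem_range] at hx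
    simp only [Finset.mem_Ico] at hx'
    omega
  have hEprod : ∏ j ∈ (Finset.range k).erase l, (s l - s j)⁻¹ =
      (∏ j ∈ Finset.range l, (s l - s j)⁻¹) * ∏ j ∈ Finset.Ico (l + 1) k, (s l - s j)⁻¹ := by
    rw [hE, Finset.prod_union hdisj]
  -- shift the second interval
  have hshift : ∏ j ∈ Finset.Ico (l + 1) k, (s l - s j)⁻¹ =
      ∏ r ∈ Finset.Ico l (k - 1), (s l - s (r + 1))⁻¹ := by
    rw [Finset.prod_Ico_eq_prod_range, Finset.prod_Ico_eq_prod_range]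
    have : k - (l + 1) = k - 1 - l := by omega
    rw [this]
    exact Finset.prod_congr rfl fun i _ => by rw [show l + 1 + i = l + i + 1 by omega]
  -- numerators combine
  have hN : (∏ r ∈ Finset.range l, (s r - s (r + 1))) *
      ∏ r ∈ Finset.Ico l (k - 1), (s r - s (r + 1)) =
      ∏ r ∈ Finset.range (k - 1), (s r - s (r + 1)) := by
    rw [Finset.range_eq_Ico]
    rw [Finset.range_eq_Ico]; exact Finset.prod_Ico_consecutive (f := fun r => s r - s (r + 1)) (Nat.zero_le l) hlk
  -- sign for the first denominator
  have hD1 : ∏ r ∈ Finset.range l, (s r - s l)⁻¹ =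
      (-1 : ℂ) ^ l * ∏ r ∈ Finset.range l, (s l - s r)⁻¹ := by
    have : ∀ r ∈ Finset.range l, (s r - s l)⁻¹ = (-1) * (s l - s r)⁻¹ := by
      intro r _
      rw [← neg_sub (s l) (s r), inv_neg]; ring
    rw [Finset.prod_congr rfl this, Finset.prod_mul_distrib, Finset.prod_const,
      Finset.card_range]
  have hsign : (-1 : ℂ) ^ (k - 1 - l) * (-1 : ℂ) ^ l = (-1 : ℂ) ^ (k - 1) := by
    rw [← pow_add, show k - 1 - l + l = k - 1 by omega]
  simp only [div_eq_mul_inv, Finset.prod_mul_distrib] at *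
  rw [hEprod, hshift, hD1]
  rw [← hN, ← hsign]
  ring

/-- for `k ≥ 3` and pairwise distinct complex numbers `s_1, ..., s_k`
(realized 0-based as `s 0, ..., s (k-1)`), with
`c_l = ∏_{r=1}^{l−1} (s_r − s_{r+1})/(s_r − s_l)` and
`c'_l = (−1)^{k−l} ∏_{r=l}^{k−1} (s_r − s_{r+1})/(s_l − s_{r+1})`,
one has `∑_{l=1}^k c_l · s_l · c'_l = 0`. -/
theorem weighted_chain_constants_sum_eq_zero (k : ℕ) (hk : 3 ≤ k) (s : ℕ → ℂ)
    (hs : ∀ i j, i < k → j < k → i ≠ j → s i ≠ s j) :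
    ∑ l ∈ Finset.range k,
        (∏ r ∈ Finset.range l, (s r - s (r + 1)) / (s r - s l)) * s l *
          ((-1 : ℂ) ^ (k - 1 - l) *
            ∏ r ∈ Finset.Ico l (k - 1), (s r - s (r + 1)) / (s l - s (r + 1))) = 0 := by
  have hinj : Set.InjOn s (Finset.range k) := by
    intro i hi j hj hij
    by_contra hne
    exact hs i j (by simpa using hi) (by simpa using hj) hne hij
  calc ∑ l ∈ Finset.range k,
        (∏ r ∈ Finset.range l, (s r - s (r + 1)) / (s r - s l)) * s l *
          ((-1 : ℂ) ^ (k - 1 - l) *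
            ∏ r ∈ Finset.Ico l (k - 1), (s r - s (r + 1)) / (s l - s (r + 1)))
      = ∑ l ∈ Finset.range k,
          (-1 : ℂ) ^ (k - 1) * (∏ r ∈ Finset.range (k - 1), (s r - s (r + 1))) *
            (s l * ∏ j ∈ (Finset.range k).erase l, (s l - s j)⁻¹) := by
        refine Finset.sum_congr rfl fun l hl => ?_
        exact term_eq k l (Finset.mem_range.mp hl) s
    _ = (-1 : ℂ) ^ (k - 1) * (∏ r ∈ Finset.range (k - 1), (s r - s (r + 1))) *
          ∑ l ∈ Finset.range k, s l * ∏ j ∈ (Finset.range k).erase l, (s l - s j)⁻¹ := by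
        rw [← Finset.mul_sum]
    _ = 0 := by rw [key_lagrange k hk s hinj, mul_zero]
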